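/- Let α be a transition independent of every transition γ₀,…,γ_{m-1}. If α is enabled in s₀ and s₀ →γ₀ s₁ →⋯→γ_{m-1} s_m →α t is a path, then there is a path s₀ →α s₀' →γ₀ s₁' →⋯→γ_{m-1} t (i.e., executing α first and then γ₀,…,γ_{m-1} reaches the same state t). -/
import Mathlib


namespace POR

variable {S : Type}

/-- A transition is a deterministic partial function on states; it is enabled
in `s` if it is defined at `s`. -/
def Enabledf (α : S → Option S) (s : S) : Prop := (α s).isSome

/-- Independence of two transitions in a given state: enabledness preservation
(in both directions) and commutativity. -/
def IndepAt (α β : S → Option S) (s : S) : Prop :=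
  (Enabledf α s → (Enabledf β s ↔ ∃ s', α s = some s' ∧ Enabledf β s')) ∧
  (Enabledf β s → (Enabledf α s ↔ ∃ s', β s = some s' ∧ Enabledf α s')) ∧
  (Enabledf α s → Enabledf β s → (α s).bind β = (β s).bind α)

/-- Two transitions are independent if they are independent in every state. -/
def Indep (α β : S → Option S) : Prop := ∀ s, IndepAt α β s
/-- α independent of γ₀,…,γ_{m-1}, enabled in s₀, and executed at
the end of the path s₀ →γ₀ ⋯ →γ_{m-1} s_m →α t, can be executed first and then
γ₀,…,γ_{m-1} reach the same state t. -/
theorem indep_commute_path (α : S → Option S) (m : ℕ)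
    (st : ℕ → S) (tr : ℕ → S → Option S) (t : S)
    (hind : ∀ i < m, Indep α (tr i))
    (hen : Enabledf α (st 0))
    (hpath : ∀ i < m, tr i (st i) = some (st (i + 1)))
    (hlast : α (st m) = some t) :
    ∃ st' : ℕ → S, α (st 0) = some (st' 0) ∧
      (∀ i < m, tr i (st' i) = some (st' (i + 1))) ∧ st' m = t := by
  induction m generalizing st tr t with
  | zero =>
    exact ⟨fun _ => t, hlast, fun i hi => absurd hi (Nat.not_lt_zero i), rfl⟩
  | succ m ih =>
    have h0 : tr 0 (st 0) = some (st 1) := hpath 0 (Nat.succ_pos m)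
    have henβ : Enabledf (tr 0) (st 0) := by
      rw [Enabledf, h0]; rfl
    obtain ⟨h1, h2, h3⟩ := hind 0 (Nat.succ_pos m) (st 0)
    have hen1 : Enabledf α (st 1) := by
      obtain ⟨s', hs', hes'⟩ := (h2 henβ).mp hen
      rw [h0] at hs'; cases hs'; exact hes'
    obtain ⟨st'', ha, hp, hl⟩ := ih (fun i => st (i + 1)) (fun i => tr (i + 1)) t
      (fun i hi => hind (i + 1) (Nat.succ_lt_succ hi)) hen1
      (fun i hi => hpath (i + 1) (Nat.succ_lt_succ hi)) hlast
    obtain ⟨s₀', hs₀'⟩ := Option.isSome_iff_exists.mp hen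
    have hcomm : (α (st 0)).bind (tr 0) = (tr 0 (st 0)).bind α := h3 hen henβ
    rw [hs₀', h0] at hcomm
    simp only [Option.bind_some] at hcomm
    rw [ha] at hcomm
    refine ⟨fun i => if i = 0 then s₀' else st'' (i - 1), hs₀',
      fun i hi => ?_, by simpa using hl⟩
    cases i with
    | zero => simpa using hcomm
    | succ j => simpa using hp j (Nat.lt_of_succ_lt_succ hi)
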